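/- The left ideal 𝓘 = Q_𝓕·ε satisfies 𝓘 = K[t,t⁻¹]·ε. Moreover 𝓘_{≤0} = {0}, and for every integer d ≥ 1, 𝓘_{≤d} = {Σ_{i=0}^{d−1} x_i·tⁱ·ε : x_0, …, x_{d−1} ∈ Q} = {Σ_{z=−d}^{d−1} y_z·t^z·ε : y_{−d}, …, y_{d−1} ∈ K}. -/

import Mathlib

open scoped TensorProduct

/-- `f` is a Laurent polynomial: a finite sum `Σ y_z · t^z` with `y_z ∈ K`. -/
def IsLaurent {K : Type} [Field K] (f : RatFunc K) : Prop :=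
  ∃ c : ℤ →₀ K, f = c.sum fun z y => algebraMap K (RatFunc K) y * RatFunc.X ^ z

/-- `X ∈ Q_F` can be written as `Σ x_z · t^z` with `x_z ∈ Q` and `|z| ≤ n`
(i.e. `X ∈ Q_𝓕` and `deg X ≤ n`; `deg 0 = -∞`). -/
def QDegLE {K Q QF : Type} [Field K] [Ring Q] [Ring QF]
    (φ' : Q →+* QF) (ψ : RatFunc K →+* QF) (X : QF) (n : ℕ) : Prop :=
  ∃ c : ℤ →₀ Q, (∀ z : ℤ, c z ≠ 0 → |z| ≤ (n : ℤ)) ∧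
    X = c.sum fun z x => φ' x * ψ (RatFunc.X ^ z)

/-- `X ∈ Q_F` lies in `Q_𝓕`, i.e. it is a finite sum `Σ x_z · t^z` with `x_z ∈ Q`. -/
def InQLaurent {K Q QF : Type} [Field K] [Ring Q] [Ring QF]
    (φ' : Q →+* QF) (ψ : RatFunc K →+* QF) (X : QF) : Prop :=
  ∃ c : ℤ →₀ Q, X = c.sum fun z x => φ' x * ψ (RatFunc.X ^ z)

theorem laurent_indep {K : Type} [Field K] (s : Finset ℤ) (g : ℤ → K)
    (h : ∑ z ∈ s, algebraMap K (RatFunc K) (g z) * RatFunc.X ^ z = 0) :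
    ∀ z ∈ s, g z = 0 := by
  set N : ℕ := s.sup fun z => (-z).toNat with hNdef
  have hN : ∀ z ∈ s, (0:ℤ) ≤ z + N := by
    intro z hz
    have h1 : (-z).toNat ≤ N := Finset.le_sup (f := fun z => (-z).toNat) hz
    have h2 : -z ≤ ((-z).toNat : ℤ) := Int.self_le_toNat _
    omega
  have h2 : ∑ z ∈ s, algebraMap K (RatFunc K) (g z) * RatFunc.X ^ (z + (N:ℤ)) = 0 := by
    have := congrArg (· * (RatFunc.X : RatFunc K) ^ (N:ℤ)) h
    simp only [Finset.sum_mul, zero_mul] at this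
    rw [← this]
    refine Finset.sum_congr rfl fun z hz => ?_
    rw [zpow_add₀ RatFunc.X_ne_zero, mul_assoc]
  have h3 : algebraMap (Polynomial K) (RatFunc K)
      (∑ z ∈ s, Polynomial.C (g z) * Polynomial.X ^ (z + (N:ℤ)).toNat) = 0 := by
    rw [map_sum, ← h2]
    refine Finset.sum_congr rfl fun z hz => ?_
    rw [map_mul, RatFunc.algebraMap_C, map_pow, RatFunc.algebraMap_X]
    congr 1
    rw [← zpow_natCast, Int.toNat_of_nonneg (hN z hz)]
  have h4 : (∑ z ∈ s, Polynomial.C (g z) * Polynomial.X ^ (z + (N:ℤ)).toNat) = 0 := by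
    apply RatFunc.algebraMap_injective
    rw [h3, map_zero]
  intro z0 hz0
  have h5 := congrArg (fun P => Polynomial.coeff P (z0 + (N:ℤ)).toNat) h4
  simp only [Polynomial.finset_sum_coeff, Polynomial.coeff_zero, Polynomial.coeff_C_mul,
    Polynomial.coeff_X_pow] at h5
  rw [Finset.sum_eq_single z0] at h5
  · simpa using h5
  · intro z hz hne
    have hne' : (z0 + (N:ℤ)).toNat ≠ (z + (N:ℤ)).toNat := by
      have := hN z hz; have := hN z0 hz0; omega
    simp [hne']
  · intro h; exact absurd hz0 h

theorem finsupp_of_fun {α M : Type*} [Zero α] [AddCommMonoid M] (s : Finset ℤ) (g : ℤ → α)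
    (F : ℤ → α → M) (hF : ∀ z, F z 0 = 0) :
    ∃ c : ℤ →₀ α, (∀ z, c z ≠ 0 → z ∈ s) ∧ c.sum F = ∑ z ∈ s, F z (g z) := by
  classical
  refine ⟨Finsupp.onFinset s (fun z => if z ∈ s then g z else 0)
      (fun z h => by by_contra hm; simp [hm] at h),
    fun z h => by by_contra hm; simp [Finsupp.onFinset_apply, hm] at h, ?_⟩
  rw [Finsupp.sum, Finset.sum_subset Finsupp.support_onFinset_subset]
  · exact Finset.sum_congr rfl fun z hz => by simp [hz]
  · intro z hz hns
    rw [Finsupp.notMem_support_iff.mp hns, hF]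

theorem ideal_II_and_degree_filtration
    -- k is a field, K/k a degree-2 Galois extension with nontrivial automorphism ι,
    -- b a nonzero element of k
    (k K : Type) [Field k] [Field K] [Algebra k K]
    (hrank : Module.finrank k K = 2)
    (ι : K ≃ₐ[k] K) (hι : ∃ x : K, ι x ≠ x)
    (hι2 : ∀ x : K, ι (ι x) = x)
    (hfix : ∀ x : K, ι x = x → ∃ c : k, algebraMap k K c = x)
    (b : k) (hb : b ≠ 0)
    -- Q = (K, ι, b) is the crossed-product quaternion k-algebra, a division ring,
    -- containing K via φ, with j·j = b, j·x = ι(x)·j, and Q = K ⊕ K·j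
    (Q : Type) [DivisionRing Q] [Algebra k Q]
    (φ : K →ₐ[k] Q) (j : Q)
    (hj2 : j * j = algebraMap k Q b)
    (hjx : ∀ x : K, j * φ x = φ (ι x) * j)
    (hQdec : ∀ q : Q, ∃! p : K × K, q = φ p.1 + φ p.2 * j)
    -- σ is the automorphism of K(t) acting as ι on K with σ(t) = b·t⁻¹
    (σ : RatFunc K ≃+* RatFunc K)
    (hσK : ∀ x : K, σ (algebraMap K (RatFunc K) x) = algebraMap K (RatFunc K) (ι x))
    (hσt : σ RatFunc.X = algebraMap K (RatFunc K) (algebraMap k K b) * RatFunc.X⁻¹)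
    -- Q_F = Q ⊗_k F, identified with K(t) ⊕ K(t)·j : it contains K(t) via ψ and an
    -- element J (the image of j) with J·J = b, J·ψ(f) = ψ(σ f)·J, Q_F = ψ(K(t)) ⊕ ψ(K(t))·J,
    -- and Q embeds via φ' compatibly with φ and j
    (QF : Type) [Ring QF]
    (ψ : RatFunc K →+* QF) (J : QF)
    (hJ2 : J * J = ψ (algebraMap K (RatFunc K) (algebraMap k K b)))
    (hJf : ∀ f : RatFunc K, J * ψ f = ψ (σ f) * J)
    (hQFdec : ∀ q : QF, ∃! p : RatFunc K × RatFunc K, q = ψ p.1 + ψ p.2 * J)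
    (φ' : Q →+* QF)
    (hφ'K : ∀ x : K, φ' (φ x) = ψ (algebraMap K (RatFunc K) x))
    (hφ'j : φ' j = J)
    -- ε = 1 + j·t⁻¹
    (ε : QF) (hε : ε = 1 + J * ψ RatFunc.X⁻¹) :
    -- 𝓘 = Q_𝓕·ε equals K[t,t⁻¹]·ε
    (∀ X : QF, (∃ Y : QF, InQLaurent φ' ψ Y ∧ X = Y * ε) ↔
      ∃ f : RatFunc K, IsLaurent f ∧ X = ψ f * ε) ∧
    -- 𝓘_{≤0} = {0}
    (∀ X : QF, ((∃ Y : QF, InQLaurent φ' ψ Y ∧ X = Y * ε) ∧ QDegLE φ' ψ X 0) ↔ X = 0) ∧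
    -- for d ≥ 1, the two descriptions of 𝓘_{≤d}
    (∀ d : ℕ, 1 ≤ d → ∀ X : QF,
      (((∃ Y : QF, InQLaurent φ' ψ Y ∧ X = Y * ε) ∧ QDegLE φ' ψ X d) ↔
        ∃ x : Fin d → Q, X = ∑ i : Fin d, φ' (x i) * ψ (RatFunc.X ^ (i : ℕ)) * ε) ∧
      (((∃ Y : QF, InQLaurent φ' ψ Y ∧ X = Y * ε) ∧ QDegLE φ' ψ X d) ↔
        ∃ y : Fin (2 * d) → K, X = ∑ i : Fin (2 * d),
          ψ (algebraMap K (RatFunc K) (y i) * RatFunc.X ^ (((i : ℕ) : ℤ) - (d : ℤ))) * ε)) := by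
  classical
  set β : ℤ → K := fun z => (algebraMap k K b) ^ z with hβdef
  have hbK : algebraMap k K b ≠ 0 :=
    (map_ne_zero_iff _ (algebraMap k K).injective).mpr hb
  have hβ0 : ∀ z, β z ≠ 0 := fun z => zpow_ne_zero z hbK
  have hβadd : ∀ z w, β (z + w) = β z * β w := fun z w => zpow_add₀ hbK z w
  have hβmulcancel : ∀ z, β (-z) * β z = 1 := by
    intro z; rw [← hβadd]; simp [hβdef]
  have hιβ : ∀ z, ι (β z) = β z := by
    intro z
    rw [hβdef]
    rw [map_zpow₀]
    rw [AlgEquiv.commutes]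
  have hσX : ∀ z : ℤ, σ (RatFunc.X ^ z) = algebraMap K (RatFunc K) (β z) * RatFunc.X ^ (-z) := by
    intro z
    rw [map_zpow₀ σ, hσt, mul_zpow, map_zpow₀, inv_zpow, ← zpow_neg]
  have hσM : ∀ (y : K) (z : ℤ), σ (algebraMap K (RatFunc K) y * RatFunc.X ^ z)
      = algebraMap K (RatFunc K) (ι y * β z) * RatFunc.X ^ (-z) := by
    intro y z
    rw [map_mul, hσK, hσX, map_mul]
    ring
  have hJM : ∀ (y : K) (z : ℤ), J * ψ (algebraMap K (RatFunc K) y * RatFunc.X ^ z)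
      = ψ (algebraMap K (RatFunc K) (ι y * β z) * RatFunc.X ^ (-z)) * J := by
    intro y z
    rw [hJf, hσM]
  have hMJ : ∀ (y : K) (z : ℤ), ψ (algebraMap K (RatFunc K) y * RatFunc.X ^ z) * J
      = J * ψ (algebraMap K (RatFunc K) (ι y * β z) * RatFunc.X ^ (-z)) := by
    intro y z
    rw [hJM, map_mul ι, hι2, hιβ, neg_neg, mul_assoc, mul_comm (β z), hβmulcancel, mul_one]
  have hψM : ∀ (y : K) (z : ℤ), ψ (algebraMap K (RatFunc K) y * RatFunc.X ^ z)
      = φ' (φ y) * ψ (RatFunc.X ^ z) := by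
    intro y z
    rw [map_mul, hφ'K]
  have hXz1 : ∀ z : ℤ, (RatFunc.X : RatFunc K) ^ z * RatFunc.X⁻¹ = RatFunc.X ^ (z - 1) := by
    intro z
    rw [sub_eq_add_neg, zpow_add₀ RatFunc.X_ne_zero, zpow_neg, zpow_one]
  have hβ1 : β 1 = algebraMap k K b := by simp [hβdef]
  have hJε : J * ε = ψ (algebraMap K (RatFunc K) (β 1) * RatFunc.X ^ (-1 : ℤ)) * ε := by
    have key : ι (β 1) * β (-1) = 1 := by
      rw [hιβ, mul_comm]; exact hβmulcancel 1
    have e1 : ψ (algebraMap K (RatFunc K) (β 1) * RatFunc.X ^ (-1:ℤ)) * (J * ψ RatFunc.X⁻¹)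
        = J := by
      rw [← mul_assoc, hMJ, key, map_one, one_mul, neg_neg, zpow_one, mul_assoc, ← map_mul,
        mul_inv_cancel₀ RatFunc.X_ne_zero, map_one, mul_one]
    have e2 : ψ (algebraMap K (RatFunc K) (β 1)) * ψ RatFunc.X⁻¹
        = ψ (algebraMap K (RatFunc K) (β 1) * RatFunc.X ^ (-1:ℤ)) := by
      rw [← map_mul, zpow_neg_one]
    rw [hε, mul_add, mul_one, mul_add, mul_one, ← mul_assoc, hJ2, ← hβ1, e1, e2, add_comm]
  have hJabs : ∀ (y : K) (z : ℤ),
      ψ (algebraMap K (RatFunc K) y * RatFunc.X ^ z) * (J * ε)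
      = ψ (algebraMap K (RatFunc K) (y * β 1) * RatFunc.X ^ (z - 1)) * ε := by
    intro y z
    rw [hJε, ← mul_assoc, ← map_mul]
    congr 2
    rw [map_mul, sub_eq_add_neg, zpow_add₀ RatFunc.X_ne_zero]
    ring
  -- expansion of a Q-coefficient times a power of t
  have hQexp : ∀ (p : K × K) (z : ℤ),
      φ' (φ p.1 + φ p.2 * j) * ψ (RatFunc.X ^ z)
      = ψ (algebraMap K (RatFunc K) p.1 * RatFunc.X ^ z)
        + ψ (algebraMap K (RatFunc K) (p.2 * β z) * RatFunc.X ^ (-z)) * J := by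
    intro p z
    rw [map_add, map_mul, hφ'j, add_mul, hψM]
    congr 1
    have h1 : ψ (RatFunc.X ^ z) = ψ (algebraMap K (RatFunc K) 1 * RatFunc.X ^ z) := by
      rw [map_one, one_mul]
    rw [mul_assoc, h1, hJM, map_one, one_mul, ← mul_assoc, hφ'K, ← map_mul, ← mul_assoc,
      ← map_mul]
  have hQterm : ∀ (p : K × K) (z : ℤ),
      φ' (φ p.1 + φ p.2 * j) * ψ (RatFunc.X ^ z) * ε
      = ψ (algebraMap K (RatFunc K) p.1 * RatFunc.X ^ z) * ε
        + ψ (algebraMap K (RatFunc K) (p.2 * β (z + 1)) * RatFunc.X ^ (-z - 1)) * ε := by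
    intro p z
    rw [hQexp, add_mul, mul_assoc, hJabs,
      show p.2 * β z * β 1 = p.2 * β (z + 1) by rw [hβadd, mul_assoc]]
  -- expansion of a monomial times ε in the Q-Laurent form
  have hME : ∀ (y : K) (z : ℤ),
      ψ (algebraMap K (RatFunc K) y * RatFunc.X ^ z) * ε
      = φ' (φ y) * ψ (RatFunc.X ^ z)
        + φ' (φ (y * β z) * j) * ψ (RatFunc.X ^ (-z - 1)) := by
    intro y z
    rw [hε, mul_add, mul_one, hψM]
    congr 1
    rw [← hψM, ← mul_assoc, hMJ, mul_assoc, ← map_mul, mul_assoc, hXz1, hψM, ← hφ'j, ← mul_assoc,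
      ← map_mul, hjx, map_mul ι, hι2, hιβ]
  -- uniqueness of decompositions
  have hψ0 : ∀ f g : RatFunc K, ψ f + ψ g * J = 0 → f = 0 ∧ g = 0 := by
    intro f g h
    obtain ⟨p, hp, hup⟩ := hQFdec 0
    have e1 : ((f, g) : RatFunc K × RatFunc K) = p := hup (f, g) h.symm
    have e2 : ((0, 0) : RatFunc K × RatFunc K) = p := hup (0, 0) (by simp)
    rw [← e2] at e1
    exact ⟨congrArg Prod.fst e1, congrArg Prod.snd e1⟩
  have hφ0 : ∀ p : K × K, φ p.1 + φ p.2 * j = 0 → p = 0 := by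
    intro p h
    obtain ⟨p0, hp0, hup⟩ := hQdec 0
    have e1 : p = p0 := hup p h.symm
    have e2 : ((0, 0) : K × K) = p0 := hup (0, 0) (by simp)
    rw [← e2] at e1
    exact e1
  obtain ⟨dec, hdec⟩ : ∃ dec : Q → K × K, ∀ q, q = φ (dec q).1 + φ (dec q).2 * j :=
    ⟨fun q => (hQdec q).choose, fun q => (hQdec q).choose_spec.1⟩
  have hdecu : ∀ (q : Q) (p : K × K), q = φ p.1 + φ p.2 * j → dec q = p := by
    intro q p h
    have h1 : p = (hQdec q).choose := (hQdec q).choose_spec.2 p h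
    have h2 : dec q = (hQdec q).choose := (hQdec q).choose_spec.2 _ (hdec q)
    rw [h2, h1]
  -- linear independence of the Q-Laurent expansion
  have hZ : ∀ (s : Finset ℤ) (g : ℤ → Q),
      ∑ z ∈ s, φ' (g z) * ψ (RatFunc.X ^ z) = 0 → ∀ z ∈ s, g z = 0 := by
    intro s g h
    have hsum : ∑ z ∈ s, φ' (g z) * ψ (RatFunc.X ^ z)
        = ψ (∑ z ∈ s, algebraMap K (RatFunc K) ((dec (g z)).1) * RatFunc.X ^ z)
          + ψ (∑ z ∈ s, algebraMap K (RatFunc K) ((dec (g z)).2 * β z) * RatFunc.X ^ (-z)) * J := by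
      rw [map_sum, map_sum, Finset.sum_mul, ← Finset.sum_add_distrib]
      refine Finset.sum_congr rfl fun z hz => ?_
      have h5 := hQexp (dec (g z)) z
      rw [← hdec (g z)] at h5
      exact h5
    rw [hsum] at h
    obtain ⟨h1, h2⟩ := hψ0 _ _ h
    have e1 := laurent_indep s _ h1
    have h2' : ∑ w ∈ s.image (fun z : ℤ => -z),
        algebraMap K (RatFunc K) ((dec (g (-w))).2 * β (-w)) * RatFunc.X ^ w = 0 := by
      rw [Finset.sum_image (by intro a _ b _ h; exact neg_inj.mp h)]
      simpa using h2
    have e2 := laurent_indep _ _ h2'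
    intro z hz
    have e1z := e1 z hz
    have e2z : (dec (g z)).2 * β z = 0 := by
      have := e2 (-z) (Finset.mem_image_of_mem _ hz)
      simpa using this
    have e2z' : (dec (g z)).2 = 0 := by
      rcases mul_eq_zero.mp e2z with h | h
      · exact h
      · exact absurd h (hβ0 z)
    have h6 := hdec (g z)
    rw [e1z, e2z'] at h6
    simpa using h6
  have hU : ∀ (s : Finset ℤ) (g1 g2 : ℤ → Q),
      ∑ z ∈ s, φ' (g1 z) * ψ (RatFunc.X ^ z) = ∑ z ∈ s, φ' (g2 z) * ψ (RatFunc.X ^ z) →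
      ∀ z ∈ s, g1 z = g2 z := by
    intro s g1 g2 h z hz
    have h0 : ∑ z ∈ s, φ' (g1 z - g2 z) * ψ (RatFunc.X ^ z) = 0 := by
      rw [show (0 : QF) = ∑ z ∈ s, φ' (g1 z) * ψ (RatFunc.X ^ z)
          - ∑ z ∈ s, φ' (g2 z) * ψ (RatFunc.X ^ z) by rw [h, sub_self], ← Finset.sum_sub_distrib]
      exact Finset.sum_congr rfl fun w hw => by rw [map_sub, sub_mul]
    exact sub_eq_zero.mp (hZ s _ h0 z hz)
  -- normal form of a K-Laurent combination times ε, as a Q-Laurent expansion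
  have hNF : ∀ (s : Finset ℤ) (g : ℤ → K), (∀ z, z ∉ s → g z = 0) →
      ∑ z ∈ s, ψ (algebraMap K (RatFunc K) (g z) * RatFunc.X ^ z) * ε
      = ∑ w ∈ s ∪ s.image (fun z : ℤ => -z - 1),
          φ' (φ (g w) + φ (g (-w-1) * β (-w-1)) * j) * ψ (RatFunc.X ^ w) := by
    intro s g hg
    have hmem : ∀ w : ℤ, w ∈ s.image (fun z : ℤ => -z-1) ↔ -w-1 ∈ s := by
      intro w
      constructor
      · intro hw
        obtain ⟨z, hz, rfl⟩ := Finset.mem_image.mp hw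
        simpa using hz
      · intro h
        exact Finset.mem_image.mpr ⟨-w-1, h, by omega⟩
    have step1 : ∑ z ∈ s, ψ (algebraMap K (RatFunc K) (g z) * RatFunc.X ^ z) * ε
        = ∑ z ∈ s, φ' (φ (g z)) * ψ (RatFunc.X ^ z)
          + ∑ z ∈ s, φ' (φ (g z * β z) * j) * ψ (RatFunc.X ^ (-z - 1)) := by
      rw [← Finset.sum_add_distrib]
      exact Finset.sum_congr rfl fun z _ => hME (g z) z
    have step2 : ∑ w ∈ s ∪ s.image (fun z : ℤ => -z - 1),
          φ' (φ (g w) + φ (g (-w-1) * β (-w-1)) * j) * ψ (RatFunc.X ^ w)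
        = ∑ w ∈ s ∪ s.image (fun z : ℤ => -z - 1), φ' (φ (g w)) * ψ (RatFunc.X ^ w)
          + ∑ w ∈ s ∪ s.image (fun z : ℤ => -z - 1),
              φ' (φ (g (-w-1) * β (-w-1)) * j) * ψ (RatFunc.X ^ w) := by
      rw [← Finset.sum_add_distrib]
      exact Finset.sum_congr rfl fun w _ => by rw [map_add, add_mul]
    have step3 : ∑ w ∈ s ∪ s.image (fun z : ℤ => -z - 1), φ' (φ (g w)) * ψ (RatFunc.X ^ w)
        = ∑ z ∈ s, φ' (φ (g z)) * ψ (RatFunc.X ^ z) := by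
      symm
      apply Finset.sum_subset Finset.subset_union_left
      intro w _ hw
      rw [hg w hw, map_zero, map_zero, zero_mul]
    have step4 : ∑ w ∈ s ∪ s.image (fun z : ℤ => -z - 1),
          φ' (φ (g (-w-1) * β (-w-1)) * j) * ψ (RatFunc.X ^ w)
        = ∑ z ∈ s, φ' (φ (g z * β z) * j) * ψ (RatFunc.X ^ (-z - 1)) := by
      rw [← Finset.sum_subset Finset.subset_union_right (fun w _ hw => by
        have h7 : (-w-1) ∉ s := fun hh => hw ((hmem w).mpr hh)
        rw [hg _ h7]
        simp)]
      rw [Finset.sum_image (fun a _ c _ h => by omega)]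
      refine Finset.sum_congr rfl fun z _ => ?_
      have e : -(-z-1)-1 = z := by ring
      rw [e]
    rw [step1, step2, step3, step4]
  have hFε0 : ∀ z : ℤ, ψ (algebraMap K (RatFunc K) (0:K) * RatFunc.X ^ z) * ε = 0 := by
    intro z; simp
  have hFεadd : ∀ (z : ℤ) (y1 y2 : K),
      ψ (algebraMap K (RatFunc K) (y1 + y2) * RatFunc.X ^ z) * ε
      = ψ (algebraMap K (RatFunc K) y1 * RatFunc.X ^ z) * ε
        + ψ (algebraMap K (RatFunc K) y2 * RatFunc.X ^ z) * ε := by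
    intro z y1 y2
    rw [map_add, add_mul, map_add, add_mul]
  -- every element of 𝓘 is a K-Laurent combination times ε
  have hcan1 : ∀ X : QF, (∃ Y, InQLaurent φ' ψ Y ∧ X = Y * ε) →
      ∃ c : ℤ →₀ K, X = c.sum (fun z y => ψ (algebraMap K (RatFunc K) y * RatFunc.X ^ z) * ε) := by
    rintro X ⟨Y, ⟨cq, hcq⟩, rfl⟩
    obtain ⟨c1, _, hc1⟩ := finsupp_of_fun cq.support (fun z => (dec (cq z)).1)
      (fun z y => ψ (algebraMap K (RatFunc K) y * RatFunc.X ^ z) * ε) hFε0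
    obtain ⟨c2, _, hc2⟩ := finsupp_of_fun (cq.support.image (fun z : ℤ => -z - 1))
      (fun w => (dec (cq (-w-1))).2 * β (-w-1+1))
      (fun z y => ψ (algebraMap K (RatFunc K) y * RatFunc.X ^ z) * ε) hFε0
    refine ⟨c1 + c2, ?_⟩
    rw [Finsupp.sum_add_index' hFε0 hFεadd, hc1, hc2]
    rw [Finset.sum_image (fun a _ c _ h => by omega)]
    rw [hcq, Finsupp.sum, Finset.sum_mul, ← Finset.sum_add_distrib]
    refine Finset.sum_congr rfl fun z hz => ?_
    have h5 := hQterm (dec (cq z)) z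
    rw [← hdec (cq z)] at h5
    rw [show -(-z-1)-1 = z from by ring]
    exact h5
  -- a K-Laurent combination times ε lies in 𝓘
  have hcan2 : ∀ (c : ℤ →₀ K), ∃ Y, InQLaurent φ' ψ Y ∧
      c.sum (fun z y => ψ (algebraMap K (RatFunc K) y * RatFunc.X ^ z) * ε) = Y * ε := by
    intro c
    obtain ⟨c0, _, hc0⟩ := finsupp_of_fun c.support (fun z => φ (c z))
      (fun z x => φ' x * ψ (RatFunc.X ^ z)) (by intro z; simp)
    refine ⟨∑ z ∈ c.support, φ' (φ (c z)) * ψ (RatFunc.X ^ z), ⟨c0, hc0.symm⟩, ?_⟩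
    rw [Finset.sum_mul, Finsupp.sum]
    exact Finset.sum_congr rfl fun z _ => by rw [hψM]
  -- central characterization of 𝓘_{≤ d}
  have hCHAR : ∀ (d : ℕ) (X : QF),
      ((∃ Y, InQLaurent φ' ψ Y ∧ X = Y * ε) ∧ QDegLE φ' ψ X d) ↔
      ∃ c : ℤ →₀ K, (∀ z, c z ≠ 0 → -(d:ℤ) ≤ z ∧ z ≤ (d:ℤ) - 1) ∧
        X = c.sum (fun z y => ψ (algebraMap K (RatFunc K) y * RatFunc.X ^ z) * ε) := by
    intro d X
    constructor
    · rintro ⟨hmem, c', hc'b, hc'⟩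
      obtain ⟨c, hc⟩ := hcan1 X hmem
      set T := (c.support ∪ c.support.image (fun z : ℤ => -z-1)) ∪ c'.support with hT
      have hnbz : ∀ w : ℤ, φ (c w) + φ (c (-w-1) * β (-w-1)) * j = 0 →
          c w = 0 ∧ c (-w-1) = 0 := by
        intro w h
        have h8 := hφ0 (c w, c (-w-1) * β (-w-1)) h
        rw [Prod.ext_iff] at h8
        refine ⟨h8.1, ?_⟩
        rcases mul_eq_zero.mp h8.2 with h9 | h9
        · exact h9
        · exact absurd h9 (hβ0 _)
      have hvan : ∀ w, w ∉ c.support ∪ c.support.image (fun z : ℤ => -z-1) →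
          φ (c w) + φ (c (-w-1) * β (-w-1)) * j = 0 := by
        intro w hw
        rw [Finset.mem_union, not_or] at hw
        have h1 : c w = 0 := Finsupp.notMem_support_iff.mp (fun h => hw.1 h)
        have h2 : c (-w-1) = 0 := by
          apply Finsupp.notMem_support_iff.mp
          intro h
          exact hw.2 (Finset.mem_image.mpr ⟨-w-1, h, by ring⟩)
        simp [h1, h2]
      have hX1 : X = ∑ w ∈ T,
          φ' (φ (c w) + φ (c (-w-1) * β (-w-1)) * j) * ψ (RatFunc.X ^ w) := by
        rw [hc, Finsupp.sum, hNF c.support c (fun z hz => Finsupp.notMem_support_iff.mp hz)]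
        apply Finset.sum_subset Finset.subset_union_left
        intro w _ hw
        rw [hvan w hw, map_zero, zero_mul]
      have hX2 : X = ∑ w ∈ T, φ' (c' w) * ψ (RatFunc.X ^ w) := by
        rw [hc', Finsupp.sum]
        apply Finset.sum_subset (hT ▸ Finset.subset_union_right)
        intro w _ hw
        rw [Finsupp.notMem_support_iff.mp hw, map_zero, zero_mul]
      have hUq := hU T (fun w => φ (c w) + φ (c (-w-1) * β (-w-1)) * j) (fun w => c' w)
        (by show (∑ z ∈ T, φ' (φ (c z) + φ (c (-z-1) * β (-z-1)) * j) * ψ (RatFunc.X ^ z))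
              = ∑ z ∈ T, φ' (c' z) * ψ (RatFunc.X ^ z)
            rw [← hX1, ← hX2])
      have hnb0 : ∀ w : ℤ, (d:ℤ) < |w| → φ (c w) + φ (c (-w-1) * β (-w-1)) * j = 0 := by
        intro w hw
        by_cases hwT : w ∈ T
        · have h9 : c' w = 0 := by
            by_contra h
            have := hc'b w h
            omega
          exact (hUq w hwT).trans h9
        · exact hvan w (fun h => hwT (Finset.mem_union_left _ h))
      refine ⟨c, ?_, hc⟩
      intro z hz
      have h1 : ¬ ((d:ℤ) < |z|) := by
        intro hlt
        exact hz (hnbz z (hnb0 z hlt)).1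
      have h2 : ¬ ((d:ℤ) < |(-z-1)|) := by
        intro hlt
        have h9 := (hnbz (-z-1) (hnb0 _ hlt)).2
        rw [show -(-z-1)-1 = z from by ring] at h9
        exact hz h9
      rw [not_lt, abs_le] at h1 h2
      omega
    · rintro ⟨c, hcb, hX⟩
      constructor
      · obtain ⟨Y, hY, hYe⟩ := hcan2 c
        exact ⟨Y, hY, by rw [hX, hYe]⟩
      · obtain ⟨c0, hb0, hsum0⟩ := finsupp_of_fun
          (c.support ∪ c.support.image (fun z : ℤ => -z-1))
          (fun w => φ (c w) + φ (c (-w-1) * β (-w-1)) * j)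
          (fun z x => φ' x * ψ (RatFunc.X ^ z)) (by intro z; simp)
        refine ⟨c0, ?_, ?_⟩
        · intro z hz
          have h9 := hb0 z hz
          rw [Finset.mem_union] at h9
          rw [abs_le]
          rcases h9 with h9 | h9
          · have := hcb z (Finsupp.mem_support_iff.mp h9)
            omega
          · obtain ⟨w, hw, rfl⟩ := Finset.mem_image.mp h9
            have := hcb w (Finsupp.mem_support_iff.mp hw)
            omega
        · rw [hX, Finsupp.sum,
            hNF c.support c (fun z hz => Finsupp.notMem_support_iff.mp hz), ← hsum0]
  refine ⟨?_, ?_, ?_⟩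
  · -- 𝓘 = K[t,t⁻¹]·ε
    intro X
    constructor
    · intro h
      obtain ⟨c, hc⟩ := hcan1 X h
      refine ⟨c.sum (fun z y => algebraMap K (RatFunc K) y * RatFunc.X ^ z), ⟨c, rfl⟩, ?_⟩
      rw [hc, Finsupp.sum, Finsupp.sum, map_sum, Finset.sum_mul]
    · rintro ⟨f, ⟨c, rfl⟩, rfl⟩
      obtain ⟨Y, hY, hYe⟩ := hcan2 c
      refine ⟨Y, hY, ?_⟩
      rw [← hYe, Finsupp.sum, Finsupp.sum, map_sum, Finset.sum_mul]
  · -- 𝓘_{≤0} = {0}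
    intro X
    rw [hCHAR 0 X]
    constructor
    · rintro ⟨c, hcb, hX⟩
      have hc0 : c = 0 := by
        ext z
        by_contra h
        have := hcb z h
        simp only [Nat.cast_zero] at this
        omega
      rw [hX, hc0, Finsupp.sum_zero_index]
    · intro h
      refine ⟨0, by simp, ?_⟩
      rw [h, Finsupp.sum_zero_index]
  · intro d hd X
    have hS2d_mem : ∀ z : ℤ, -(d:ℤ) ≤ z → z ≤ (d:ℤ) - 1 →
        z ∈ (Finset.range (2*d)).image (fun i : ℕ => (i:ℤ) - d) := by
      intro z h1 h2
      refine Finset.mem_image.mpr ⟨(z + d).toNat, Finset.mem_range.mpr (by omega), by omega⟩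
    have hdescr2 : ((∃ Y, InQLaurent φ' ψ Y ∧ X = Y * ε) ∧ QDegLE φ' ψ X d) ↔
        ∃ y : Fin (2 * d) → K, X = ∑ i : Fin (2 * d),
          ψ (algebraMap K (RatFunc K) (y i) * RatFunc.X ^ (((i : ℕ) : ℤ) - (d : ℤ))) * ε := by
      rw [hCHAR d X]
      constructor
      · rintro ⟨c, hcb, hX⟩
        refine ⟨fun i => c ((i:ℤ) - d), ?_⟩
        rw [hX, Finsupp.sum]
        rw [Finset.sum_subset (fun z hz => by
            obtain ⟨h1, h2⟩ := hcb z (Finsupp.mem_support_iff.mp hz)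
            exact hS2d_mem z h1 h2)
          (fun z _ hz => by rw [Finsupp.notMem_support_iff.mp hz]; simp)]
        rw [Finset.sum_image (fun a _ c _ h => by omega)]
        rw [← Fin.sum_univ_eq_sum_range
          (fun i : ℕ => ψ (algebraMap K (RatFunc K) (c ((i:ℤ) - d)) * RatFunc.X ^ ((i:ℤ) - d)) * ε)
          (2*d)]
      · rintro ⟨y, hX⟩
        obtain ⟨c, hb, hsum⟩ := finsupp_of_fun ((Finset.range (2*d)).image (fun i : ℕ => (i:ℤ) - d))
          (fun z => if h : 0 ≤ z + d ∧ z + d < 2*d then y ⟨(z+d).toNat, by omega⟩ else 0)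
          (fun z y => ψ (algebraMap K (RatFunc K) y * RatFunc.X ^ z) * ε) hFε0
        refine ⟨c, ?_, ?_⟩
        · intro z hz
          obtain ⟨i, hi, rfl⟩ := Finset.mem_image.mp (hb z hz)
          rw [Finset.mem_range] at hi
          omega
        · rw [hsum, Finset.sum_image (fun a _ c _ h => by omega), hX,
            ← Fin.sum_univ_eq_sum_range (fun i : ℕ =>
              ψ (algebraMap K (RatFunc K)
                (if h : 0 ≤ (i:ℤ) - d + d ∧ (i:ℤ) - d + d < 2*d
                  then y ⟨(((i:ℤ) - d)+d).toNat, by omega⟩ else 0)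
                * RatFunc.X ^ ((i:ℤ) - d)) * ε) (2*d)]
          refine Finset.sum_congr rfl fun i _ => ?_
          have hcond : 0 ≤ ((i:ℕ):ℤ) - d + d ∧ ((i:ℕ):ℤ) - d + d < 2*d := by
            have := i.isLt
            omega
          rw [dif_pos hcond, show (⟨((((i:ℕ)):ℤ) - d + d).toNat, by omega⟩ : Fin (2*d)) = i
            from Fin.ext (by simp)]
    refine ⟨?_, hdescr2⟩
    set S1 := (Finset.range d).image (fun i : ℕ => (i:ℤ)) with hS1def
    set S2 := (Finset.range d).image (fun i : ℕ => -(i:ℤ) - 1) with hS2def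
    have hdisj : Disjoint S1 S2 := by
      rw [Finset.disjoint_left]
      intro z h1 h2
      obtain ⟨i, _, rfl⟩ := Finset.mem_image.mp h1
      obtain ⟨i2, _, he⟩ := Finset.mem_image.mp h2
      omega
    have hsum12 : ∀ g : ℤ → K,
        ∑ z ∈ S1 ∪ S2, ψ (algebraMap K (RatFunc K) (g z) * RatFunc.X ^ z) * ε
        = ∑ i : Fin d, ψ (algebraMap K (RatFunc K) (g ((i:ℕ):ℤ)) * RatFunc.X ^ (((i:ℕ)):ℤ)) * ε
          + ∑ i : Fin d,
              ψ (algebraMap K (RatFunc K) (g (-((i:ℕ):ℤ)-1)) * RatFunc.X ^ (-((i:ℕ):ℤ)-1)) * ε := by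
      intro g
      rw [Finset.sum_union hdisj, hS1def, hS2def,
        Finset.sum_image (fun a _ c _ h => by omega),
        Finset.sum_image (fun a _ c _ h => by omega),
        ← Fin.sum_univ_eq_sum_range
          (fun i : ℕ => ψ (algebraMap K (RatFunc K) (g (i:ℤ)) * RatFunc.X ^ ((i:ℤ))) * ε) d,
        ← Fin.sum_univ_eq_sum_range
          (fun i : ℕ => ψ (algebraMap K (RatFunc K) (g (-(i:ℤ)-1)) * RatFunc.X ^ (-(i:ℤ)-1)) * ε) d]
    rw [hCHAR d X]
    constructor
    · rintro ⟨c, hcb, hX⟩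
      refine ⟨fun i => φ (c ((i:ℕ):ℤ)) + φ (c (-((i:ℕ):ℤ)-1) * β (-((i:ℕ):ℤ)-1)) * j, ?_⟩
      have hsplit : ∑ i : Fin d,
            φ' (φ (c ((i:ℕ):ℤ)) + φ (c (-((i:ℕ):ℤ)-1) * β (-((i:ℕ):ℤ)-1)) * j)
              * ψ (RatFunc.X ^ (i:ℕ)) * ε
          = ∑ i : Fin d, ψ (algebraMap K (RatFunc K) (c ((i:ℕ):ℤ)) * RatFunc.X ^ (((i:ℕ)):ℤ)) * ε
            + ∑ i : Fin d,
                ψ (algebraMap K (RatFunc K) (c (-((i:ℕ):ℤ)-1)) * RatFunc.X ^ (-((i:ℕ):ℤ)-1)) * ε := by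
        rw [← Finset.sum_add_distrib]
        refine Finset.sum_congr rfl fun i _ => ?_
        have h5 := hQterm (c ((i:ℕ):ℤ), c (-((i:ℕ):ℤ)-1) * β (-((i:ℕ):ℤ)-1)) ((i:ℕ):ℤ)
        rw [show ((RatFunc.X : RatFunc K) ^ ((i:ℕ))) = RatFunc.X ^ (((i:ℕ)):ℤ)
          from (zpow_natCast _ _).symm, h5]
        congr 3
        rw [mul_assoc, ← hβadd, show (-((i:ℕ):ℤ)-1) + (((i:ℕ):ℤ)+1) = 0 from by ring]
        simp [hβdef]
      have hXs : X = ∑ z ∈ S1 ∪ S2, ψ (algebraMap K (RatFunc K) (c z) * RatFunc.X ^ z) * ε := by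
        rw [hX, Finsupp.sum]
        apply Finset.sum_subset
        · intro z hz
          obtain ⟨h1, h2⟩ := hcb z (Finsupp.mem_support_iff.mp hz)
          rw [Finset.mem_union]
          by_cases h0 : 0 ≤ z
          · exact Or.inl (Finset.mem_image.mpr
              ⟨z.toNat, Finset.mem_range.mpr (by omega), by omega⟩)
          · exact Or.inr (Finset.mem_image.mpr
              ⟨(-z-1).toNat, Finset.mem_range.mpr (by omega), by omega⟩)
        · intro z _ hz
          rw [Finsupp.notMem_support_iff.mp hz]
          simp
      exact hXs.trans ((hsum12 c).trans hsplit.symm)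
    · rintro ⟨x, hX⟩
      set g : ℤ → K := fun z =>
        if h : 0 ≤ z ∧ z < (d:ℤ) then (dec (x ⟨z.toNat, by omega⟩)).1
        else if h2 : -(d:ℤ) ≤ z ∧ z < 0 then (dec (x ⟨(-z-1).toNat, by omega⟩)).2 * β (-z)
        else 0 with hgdef
      have hg1 : ∀ i : Fin d, g ((i:ℕ):ℤ) = (dec (x i)).1 := by
        intro i
        have hi := i.isLt
        simp only [hgdef]
        rw [dif_pos (⟨by omega, by omega⟩ : (0:ℤ) ≤ ((i:ℕ):ℤ) ∧ ((i:ℕ):ℤ) < (d:ℤ))]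
        exact congrArg (fun t => (dec (x t)).1)
          (Fin.ext (by show ((((i:ℕ):ℤ)).toNat) = (i:ℕ); omega))
      have hg2 : ∀ i : Fin d, g (-((i:ℕ):ℤ)-1) = (dec (x i)).2 * β (((i:ℕ):ℤ)+1) := by
        intro i
        have hi := i.isLt
        simp only [hgdef]
        rw [dif_neg (by omega), dif_pos
          (⟨by omega, by omega⟩ : -(d:ℤ) ≤ -((i:ℕ):ℤ)-1 ∧ -((i:ℕ):ℤ)-1 < 0)]
        congr 1
        · exact congrArg (fun t => (dec (x t)).2)
            (Fin.ext (by show ((-(-((i:ℕ):ℤ)-1)-1)).toNat = (i:ℕ); omega))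
        · exact congrArg β (by ring)
      obtain ⟨c, hb, hsum⟩ := finsupp_of_fun (S1 ∪ S2) g
        (fun z y => ψ (algebraMap K (RatFunc K) y * RatFunc.X ^ z) * ε) hFε0
      refine ⟨c, ?_, ?_⟩
      · intro z hz
        have h9 := hb z hz
        rw [Finset.mem_union] at h9
        rcases h9 with h9 | h9 <;>
          · obtain ⟨i, hi, rfl⟩ := Finset.mem_image.mp h9
            rw [Finset.mem_range] at hi
            omega
      · rw [hsum, hsum12 g, hX, ← Finset.sum_add_distrib]
        refine Finset.sum_congr rfl fun i _ => ?_
        rw [hg1 i, hg2 i]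
        have h5 := hQterm (dec (x i)) ((i:ℕ):ℤ)
        rw [← hdec (x i)] at h5
        rw [show ((RatFunc.X : RatFunc K) ^ (((i:ℕ)):ℤ)) = RatFunc.X ^ ((i:ℕ))
          from zpow_natCast _ _] at h5
        exact h5
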